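/- Let u : ℝ^m → ℝ^m be twice continuously differentiable with compact support and let μ, λ be real constants. Then ∫_{ℝ^m} Σ_{i=1}^m u_i(x) · ( −μ Σ_{j=1}^m ∂_j(∂_j u_i − ∂_i u_j)(x) − (2μ+λ) ∂_i(div u)(x) ) dx = ∫_{ℝ^m} ( μ Σ_{1 ≤ i < j ≤ m} (∂_j u_i − ∂_i u_j)(x)² + (2μ+λ)(div u)(x)² ) dx. In particular, if μ > 0 and 2μ+λ > 0 and u satisfies −μΔu − (μ+λ)∇div u = 0, then ∂_j u_i − ∂_i u_j = 0 for all i, j and div u = 0 everywhere. -/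

import Mathlib

open MeasureTheory

/-- The partial derivative `∂_j f` of a scalar function on `ℝ^m`. -/
noncomputable def pd {m : ℕ} (j : Fin m) (f : (Fin m → ℝ) → ℝ) (x : Fin m → ℝ) : ℝ :=
  fderiv ℝ f x (Pi.single j 1)

variable {m : ℕ}

lemma pd_contDiff {f : (Fin m → ℝ) → ℝ} (hf : ContDiff ℝ 2 f) (j : Fin m) :
    ContDiff ℝ 1 (pd j f) :=
  (hf.fderiv_right (m := 1) (by norm_num)).clm_apply contDiff_const

lemma pd_continuous {f : (Fin m → ℝ) → ℝ} (hf : ContDiff ℝ 1 f) (j : Fin m) :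
    Continuous (pd j f) := by
  have h : Continuous (fderiv ℝ f) := hf.continuous_fderiv one_ne_zero
  exact (ContinuousLinearMap.apply ℝ ℝ (Pi.single j (1:ℝ))).continuous.comp h

lemma pd_hcs {f : (Fin m → ℝ) → ℝ} (hf : HasCompactSupport f) (j : Fin m) :
    HasCompactSupport (pd j f) :=
  (hf.fderiv (𝕜 := ℝ)).comp_left (g := fun L : (Fin m → ℝ) →L[ℝ] ℝ => L (Pi.single j 1)) rfl

lemma hcs_sub {f g : (Fin m → ℝ) → ℝ} (hf : HasCompactSupport f) (hg : HasCompactSupport g) :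
    HasCompactSupport (fun x => f x - g x) := by
  have : (fun x => f x - g x) = f + (-g) := by ext x; simp [sub_eq_add_neg]
  rw [this]
  exact hf.add (by simpa [HasCompactSupport, tsupport] using hg)

lemma hcs_sum {ι : Type*} (s : Finset ι) (f : ι → (Fin m → ℝ) → ℝ)
    (h : ∀ i ∈ s, HasCompactSupport (f i)) :
    HasCompactSupport (fun x => ∑ i ∈ s, f i x) := by
  classical
  induction s using Finset.cons_induction with
  | empty =>
    have : (fun x : Fin m → ℝ => ∑ i ∈ (∅ : Finset ι), f i x) = fun _ => 0 := by simp
    rw [this]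
    simp only [HasCompactSupport, tsupport, Function.support_zero, closure_empty]
    simp
  | cons a s ha ih =>
    simp only [Finset.sum_cons]
    exact HasCompactSupport.add (h a (Finset.mem_cons_self a s))
      (ih fun i hi => h i (Finset.mem_cons_of_mem hi))

lemma intg {f g : (Fin m → ℝ) → ℝ} (hf : Continuous f) (hg : Continuous g)
    (hgc : HasCompactSupport g) : Integrable (fun x => f x * g x) := by
  exact (hf.mul hg).integrable_of_hasCompactSupport hgc.mul_left

lemma ibp {f g : (Fin m → ℝ) → ℝ} (hf : ContDiff ℝ 1 f) (hg : ContDiff ℝ 1 g)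
    (hfc : HasCompactSupport f) (hgc : HasCompactSupport g) (j : Fin m) :
    ∫ x, f x * pd j g x = - ∫ x, pd j f x * g x := by
  apply integral_mul_fderiv_eq_neg_fderiv_mul_of_integrable
  · exact intg (pd_continuous hf j) hg.continuous hgc
  · exact intg hf.continuous (pd_continuous hg j) (pd_hcs hgc j)
  · exact intg hf.continuous hg.continuous hgc
  · exact fun x _ => hf.differentiable one_ne_zero x
  · exact fun x _ => hg.differentiable one_ne_zero x
lemma alg {m : ℕ} (b : Fin m → Fin m → ℝ) :
    ∑ i, ∑ j, b i j * (b i j - b j i)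
      = ∑ i, ∑ j ∈ Finset.univ.filter (fun j => i < j), (b i j - b j i) ^ 2 := by
  have hswap : ∀ f : Fin m → Fin m → ℝ, (∑ i, ∑ j, f i j) = ∑ i, ∑ j, f j i :=
    fun f => Finset.sum_comm
  have h1 : ∑ i, ∑ j, b i j * (b i j - b j i) = ∑ i, ∑ j, b j i * (b j i - b i j) :=
    hswap (fun i j => b i j * (b i j - b j i))
  have h2 : ∑ i, ∑ j, ((b i j * (b i j - b j i)) + (b j i * (b j i - b i j)))
      = ∑ i, ∑ j, (b i j - b j i) ^ 2 :=
    Finset.sum_congr rfl fun i _ => Finset.sum_congr rfl fun j _ => by ring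
  have h3 : ∑ i, ∑ j, ((b i j * (b i j - b j i)) + (b j i * (b j i - b i j)))
      = ∑ i, ∑ j, b i j * (b i j - b j i) + ∑ i, ∑ j, b j i * (b j i - b i j) := by
    simp [Finset.sum_add_distrib]
  have h4 : ∑ i, ∑ j, (b i j - b j i) ^ 2
      = ∑ i, ∑ j, (if i < j then (b i j - b j i) ^ 2 else 0)
        + ∑ i, ∑ j, (if j < i then (b i j - b j i) ^ 2 else 0) := by
    rw [← Finset.sum_add_distrib]
    simp_rw [← Finset.sum_add_distrib]
    refine Finset.sum_congr rfl fun i _ => Finset.sum_congr rfl fun j _ => ?_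
    rcases lt_trichotomy i j with h | h | h
    · simp [h, not_lt_of_gt h]
    · subst h; simp
    · simp [h, not_lt_of_gt h]
  have h5 : ∑ i, ∑ j, (if j < i then (b i j - b j i) ^ 2 else 0)
      = ∑ i, ∑ j, (if i < j then (b i j - b j i) ^ 2 else 0) := by
    rw [hswap (fun i j => if j < i then (b i j - b j i) ^ 2 else 0)]
    refine Finset.sum_congr rfl fun i _ => Finset.sum_congr rfl fun j _ => ?_
    rcases eq_or_ne i j with rfl | h
    · rfl
    · have : (b j i - b i j) ^ 2 = (b i j - b j i) ^ 2 := by ring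
      simp [this]
  have h6 : ∑ i, ∑ j ∈ Finset.univ.filter (fun j => i < j), (b i j - b j i) ^ 2
      = ∑ i, ∑ j, (if i < j then (b i j - b j i) ^ 2 else 0) := by
    simp [Finset.sum_filter]
  rw [h6]
  nlinarith [h1, h2, h3, h4, h5]

noncomputable def wf {m : ℕ} (v : Fin m → (Fin m → ℝ) → ℝ) (i j : Fin m) : (Fin m → ℝ) → ℝ :=
  fun y => pd j (v i) y - pd i (v j) y

noncomputable def Df {m : ℕ} (v : Fin m → (Fin m → ℝ) → ℝ) : (Fin m → ℝ) → ℝ :=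
  fun y => ∑ j, pd j (v j) y

lemma green {m : ℕ} (v : Fin m → (Fin m → ℝ) → ℝ) (hv : ∀ i, ContDiff ℝ 2 (v i))
    (hvs : ∀ i, HasCompactSupport (v i)) (μ c : ℝ) :
    ∫ x : Fin m → ℝ, ∑ i, v i x *
        (-μ * ∑ j, pd j (wf v i j) x - c * pd i (Df v) x)
      = ∫ x : Fin m → ℝ,
          (μ * ∑ i, ∑ j ∈ Finset.univ.filter (fun j => i < j), (wf v i j x) ^ 2
            + c * (Df v x) ^ 2) := by
  have ha1 : ∀ i j, ContDiff ℝ 1 (pd j (v i)) := fun i j => pd_contDiff (hv i) j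
  have hacs : ∀ i j, HasCompactSupport (pd j (v i)) := fun i j => pd_hcs (hvs i) j
  have hac : ∀ i j, Continuous (pd j (v i)) := fun i j => (ha1 i j).continuous
  have hw1 : ∀ i j, ContDiff ℝ 1 (wf v i j) := fun i j => (ha1 i j).sub (ha1 j i)
  have hwcs : ∀ i j, HasCompactSupport (wf v i j) := fun i j => hcs_sub (hacs i j) (hacs j i)
  have hD1 : ContDiff ℝ 1 (Df v) := ContDiff.sum fun j _ => ha1 j j
  have hDcs : HasCompactSupport (Df v) := hcs_sum _ _ fun j _ => hacs j j
  -- integration by parts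
  have key : ∀ i j, ∫ x, v i x * pd j (wf v i j) x = - ∫ x, pd j (v i) x * wf v i j x :=
    fun i j => ibp ((hv i).of_le one_le_two) (hw1 i j) (hvs i) (hwcs i j) j
  have keyD : ∀ i, ∫ x, v i x * pd i (Df v) x = - ∫ x, pd i (v i) x * Df v x :=
    fun i => ibp ((hv i).of_le one_le_two) hD1 (hvs i) hDcs i
  -- integrability
  have int_vW : ∀ i j, Integrable (fun x => v i x * pd j (wf v i j) x) :=
    fun i j => intg (hv i).continuous (pd_continuous (hw1 i j) j) (pd_hcs (hwcs i j) j)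
  have int_vP : ∀ i, Integrable (fun x => v i x * pd i (Df v) x) :=
    fun i => intg (hv i).continuous (pd_continuous hD1 i) (pd_hcs hDcs i)
  have int_aw : ∀ i j, Integrable (fun x => pd j (v i) x * wf v i j x) :=
    fun i j => intg (hac i j) (hw1 i j).continuous (hwcs i j)
  have int_aD : ∀ i, Integrable (fun x => pd i (v i) x * Df v x) :=
    fun i => intg (hac i i) hD1.continuous hDcs
  have int_big : ∀ i, Integrable (fun x => v i x *
      (-μ * ∑ j, pd j (wf v i j) x - c * pd i (Df v) x)) := by
    intro i
    refine intg (hv i).continuous ?_ ?_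
    · exact (continuous_const.mul (continuous_finset_sum _ fun j _ =>
        pd_continuous (hw1 i j) j)).sub (continuous_const.mul (pd_continuous hD1 i))
    · exact hcs_sub ((hcs_sum _ _ fun j _ => pd_hcs (hwcs i j) j).mul_left)
        ((pd_hcs hDcs i).mul_left)
  -- LHS computation
  have L1 : (∫ x : Fin m → ℝ, ∑ i, v i x *
        (-μ * ∑ j, pd j (wf v i j) x - c * pd i (Df v) x))
      = μ * (∑ i, ∑ j, ∫ x, pd j (v i) x * wf v i j x)
        + c * (∑ i, ∫ x, pd i (v i) x * Df v x) := by
    rw [integral_finset_sum _ fun i _ => int_big i]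
    have step : ∀ i, ∫ x, v i x * (-μ * ∑ j, pd j (wf v i j) x - c * pd i (Df v) x)
        = μ * (∑ j, ∫ x, pd j (v i) x * wf v i j x)
          + c * (∫ x, pd i (v i) x * Df v x) := by
      intro i
      have hpt : (fun x => v i x * (-μ * ∑ j, pd j (wf v i j) x - c * pd i (Df v) x))
          = fun x => (∑ j, (-μ) * (v i x * pd j (wf v i j) x))
            + (-c) * (v i x * pd i (Df v) x) := by
        funext x
        rw [← Finset.mul_sum, ← Finset.mul_sum]
        ring
      rw [hpt, integral_add (integrable_finset_sum _ fun j _ => (int_vW i j).const_mul _)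
        ((int_vP i).const_mul _), integral_finset_sum _ fun j _ => (int_vW i j).const_mul _]
      simp_rw [integral_const_mul, key, keyD]
      rw [← Finset.mul_sum]
      ring_nf
      rw [Finset.sum_neg_distrib]
      ring
    rw [Finset.sum_congr rfl fun i _ => step i, Finset.sum_add_distrib,
      ← Finset.mul_sum, ← Finset.mul_sum]
  rw [L1]
  -- RHS computation
  have R1 : (∫ x : Fin m → ℝ,
        (μ * ∑ i, ∑ j ∈ Finset.univ.filter (fun j => i < j), (wf v i j x) ^ 2
          + c * (Df v x) ^ 2))
      = ∫ x : Fin m → ℝ, (μ * ∑ i, ∑ j, pd j (v i) x * wf v i j x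
          + c * ∑ i, pd i (v i) x * Df v x) := by
    congr 1; funext x
    have halg : ∑ i, ∑ j, pd j (v i) x * wf v i j x
        = ∑ i, ∑ j ∈ Finset.univ.filter (fun j => i < j), (wf v i j x) ^ 2 :=
      alg (fun i j => pd j (v i) x)
    have h2 : (Df v x) ^ 2 = ∑ i, pd i (v i) x * Df v x := by
      rw [sq]
      show (∑ j, pd j (v j) x) * Df v x = _
      rw [Finset.sum_mul]
    rw [h2, ← halg]
  rw [R1, integral_add ((integrable_finset_sum _ fun i _ =>
      integrable_finset_sum _ fun j _ => int_aw i j).const_mul _)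
    ((integrable_finset_sum _ fun i _ => int_aD i).const_mul _),
    integral_const_mul, integral_const_mul,
    integral_finset_sum _ fun i _ => integrable_finset_sum _ fun j _ => int_aw i j,
    integral_finset_sum _ fun i _ => int_aD i]
  rw [Finset.sum_congr rfl fun i (_ : i ∈ Finset.univ) =>
    integral_finset_sum _ fun j _ => int_aw i j]
lemma pd_sub {F G : (Fin m → ℝ) → ℝ} {x : Fin m → ℝ} (hF : DifferentiableAt ℝ F x)
    (hG : DifferentiableAt ℝ G x) (j : Fin m) :
    pd j (fun y => F y - G y) x = pd j F x - pd j G x := by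
  show fderiv ℝ (fun y => F y - G y) x _ = _
  rw [fderiv_fun_sub hF hG]
  rfl

lemma pd_sum {f : Fin m → (Fin m → ℝ) → ℝ} {x : Fin m → ℝ}
    (h : ∀ j, DifferentiableAt ℝ (f j) x) (i : Fin m) :
    pd i (fun y => ∑ j, f j y) x = ∑ j, pd i (f j) x := by
  show fderiv ℝ (fun y => ∑ j, f j y) x _ = _
  rw [fderiv_fun_sum (fun j _ => h j), ContinuousLinearMap.sum_apply]
  rfl

lemma pd_comm {f : (Fin m → ℝ) → ℝ} (hf : ContDiff ℝ 2 f) (i j : Fin m) (x : Fin m → ℝ) :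
    pd j (pd i f) x = pd i (pd j f) x := by
  have h1 : DifferentiableAt ℝ (fderiv ℝ f) x :=
    ((hf.fderiv_right (m := 1) le_rfl).differentiable one_ne_zero) x
  have e : ∀ k l : Fin m, pd l (pd k f) x
      = fderiv ℝ (fderiv ℝ f) x (Pi.single l 1) (Pi.single k 1) := by
    intro k l
    show fderiv ℝ (fun y => fderiv ℝ f y (Pi.single k 1)) x (Pi.single l 1) = _
    rw [fderiv_clm_apply h1 (differentiableAt_const _)]
    simp
  rw [e i j, e j i]
  exact (hf.contDiffAt.isSymmSndFDerivAt (by norm_num)) _ _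

lemma vanish {m : ℕ} (v : Fin m → (Fin m → ℝ) → ℝ) (hv : ∀ i, ContDiff ℝ 2 (v i))
    (hvs : ∀ i, HasCompactSupport (v i)) (μ lam : ℝ) (hμ : 0 < μ) (hc : 0 < 2 * μ + lam)
    (hPDE : ∀ (x : Fin m → ℝ) (i : Fin m),
      -μ * ∑ j, pd j (pd j (v i)) x - (μ + lam) * pd i (Df v) x = 0) :
    (∀ (x : Fin m → ℝ) (i j : Fin m), wf v i j x = 0) ∧ (∀ x, Df v x = 0) := by
  have ha1 : ∀ i j, ContDiff ℝ 1 (pd j (v i)) := fun i j => pd_contDiff (hv i) j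
  have hacs : ∀ i j, HasCompactSupport (pd j (v i)) := fun i j => pd_hcs (hvs i) j
  have hdiff : ∀ i j x, DifferentiableAt ℝ (pd j (v i)) x :=
    fun i j x => ((ha1 i j).differentiable one_ne_zero) x
  have hw1 : ∀ i j, ContDiff ℝ 1 (wf v i j) := fun i j => (ha1 i j).sub (ha1 j i)
  have hwcs : ∀ i j, HasCompactSupport (wf v i j) := fun i j => hcs_sub (hacs i j) (hacs j i)
  have hD1 : ContDiff ℝ 1 (Df v) := ContDiff.sum fun j _ => ha1 j j
  have hDcs : HasCompactSupport (Df v) := hcs_sum _ _ fun j _ => hacs j j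
  have hzero : ∀ x i, -μ * ∑ j, pd j (wf v i j) x - (2 * μ + lam) * pd i (Df v) x = 0 := by
    intro x i
    have h3 : pd i (Df v) x = ∑ j, pd i (pd j (v j)) x := pd_sum (fun j => hdiff j j x) i
    have h4 : ∑ j, pd j (wf v i j) x
        = ∑ j, pd j (pd j (v i)) x - pd i (Df v) x := by
      rw [h3, ← Finset.sum_sub_distrib]
      refine Finset.sum_congr rfl fun j _ => ?_
      have h1 : pd j (wf v i j) x = pd j (pd j (v i)) x - pd j (pd i (v j)) x :=
        pd_sub (hdiff i j x) (hdiff j i x) j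
      rw [h1, pd_comm (hv j) i j x]
    rw [h4]
    linear_combination hPDE x i
  set g : (Fin m → ℝ) → ℝ := fun x =>
    μ * ∑ i, ∑ j ∈ Finset.univ.filter (fun j => i < j), (wf v i j x) ^ 2
      + (2 * μ + lam) * (Df v x) ^ 2 with hg
  have hgc : Continuous g := by
    refine (continuous_const.mul (continuous_finset_sum _ fun i _ =>
      continuous_finset_sum _ fun j _ => ((hw1 i j).continuous.pow 2))).add
      (continuous_const.mul (hD1.continuous.pow 2))
  have hgs : HasCompactSupport g := by
    refine HasCompactSupport.add ?_ ?_
    · exact (hcs_sum _ _ fun i _ => hcs_sum _ _ fun j _ =>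
        (hwcs i j).comp_left (g := fun t : ℝ => t ^ 2) (by norm_num)).mul_left
    · exact (hDcs.comp_left (g := fun t : ℝ => t ^ 2) (by norm_num)).mul_left
  have hgint : Integrable g := hgc.integrable_of_hasCompactSupport hgs
  have hint0 : ∫ x, g x = 0 := by
    have hgr := green v hv hvs μ (2 * μ + lam)
    have hz : (fun x => ∑ i, v i x *
        (-μ * ∑ j, pd j (wf v i j) x - (2 * μ + lam) * pd i (Df v) x)) = fun _ => (0 : ℝ) :=
      funext fun x => Finset.sum_eq_zero fun i _ => by rw [hzero x i, mul_zero]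
    rw [hz] at hgr
    simpa using hgr.symm
  have hgnn : 0 ≤ g := by
    intro x
    refine add_nonneg (mul_nonneg hμ.le ?_) (mul_nonneg hc.le (sq_nonneg _))
    exact Finset.sum_nonneg fun i _ => Finset.sum_nonneg fun j _ => sq_nonneg _
  have hae : g =ᵐ[volume] (0 : (Fin m → ℝ) → ℝ) :=
    (integral_eq_zero_iff_of_nonneg hgnn hgint).1 hint0
  have hgeq : g = (0 : (Fin m → ℝ) → ℝ) := (Continuous.ae_eq_iff_eq volume hgc continuous_const).1 hae
  have hptS : ∀ x, ∑ i, ∑ j ∈ Finset.univ.filter (fun j => i < j), (wf v i j x) ^ 2 = 0 := by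
    intro x
    have hx : g x = 0 := congrFun hgeq x
    have hS : 0 ≤ ∑ i, ∑ j ∈ Finset.univ.filter (fun j => i < j), (wf v i j x) ^ 2 :=
      Finset.sum_nonneg fun i _ => Finset.sum_nonneg fun j _ => sq_nonneg _
    simp only [hg] at hx
    nlinarith [sq_nonneg (Df v x)]
  have hptD : ∀ x, Df v x = 0 := by
    intro x
    have hx : g x = 0 := congrFun hgeq x
    have hS : 0 ≤ ∑ i, ∑ j ∈ Finset.univ.filter (fun j => i < j), (wf v i j x) ^ 2 :=
      Finset.sum_nonneg fun i _ => Finset.sum_nonneg fun j _ => sq_nonneg _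
    simp only [hg] at hx
    have hsq : (Df v x) ^ 2 = 0 := by nlinarith
    exact (pow_eq_zero_iff two_ne_zero).1 hsq
  refine ⟨?_, hptD⟩
  intro x i j
  have hlt : ∀ i j : Fin m, i < j → wf v i j x = 0 := by
    intro i j hij
    have hall := (Finset.sum_eq_zero_iff_of_nonneg fun i (_ : i ∈ Finset.univ) =>
      Finset.sum_nonneg fun j _ => sq_nonneg (wf v i j x)).1 (hptS x)
    have hi := (Finset.sum_eq_zero_iff_of_nonneg fun j _ => sq_nonneg (wf v i j x)).1
      (hall i (Finset.mem_univ i)) j (Finset.mem_filter.2 ⟨Finset.mem_univ j, hij⟩)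
    exact (pow_eq_zero_iff two_ne_zero).1 hi
  rcases lt_trichotomy i j with h | h | h
  · exact hlt i j h
  · subst h; exact sub_self _
  · have hsymm : wf v i j x = -(wf v j i x) := by
      show pd j (v i) x - pd i (v j) x = -(pd i (v j) x - pd j (v i) x)
      ring
    rw [hsymm, hlt j i h, neg_zero]

/-- Green-type identity for the factorization of the Lamé operator through the vorticity
`rot_m` and the divergence, and the resulting vanishing of `rot u` and `div u` for
solutions of the Lamé system. -/
theorem stmt13 {m : ℕ} (u : (Fin m → ℝ) → (Fin m → ℝ)) (hu : ContDiff ℝ 2 u)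
    (hsupp : HasCompactSupport u) (μ lam : ℝ) :
    (∫ x : Fin m → ℝ, ∑ i, u x i *
        (-μ * ∑ j, pd j (fun y => pd j (fun z => u z i) y - pd i (fun z => u z j) y) x
          - (2 * μ + lam) * pd i (fun y => ∑ j, pd j (fun z => u z j) y) x)
      = ∫ x : Fin m → ℝ,
          (μ * ∑ i, ∑ j ∈ Finset.univ.filter (fun j => i < j),
              (pd j (fun z => u z i) x - pd i (fun z => u z j) x) ^ 2
            + (2 * μ + lam) * (∑ j, pd j (fun z => u z j) x) ^ 2)) ∧
    (0 < μ → 0 < 2 * μ + lam →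
      (∀ (x : Fin m → ℝ) (i : Fin m),
        -μ * ∑ j, pd j (fun y => pd j (fun z => u z i) y) x
          - (μ + lam) * pd i (fun y => ∑ j, pd j (fun z => u z j) y) x = 0) →
      (∀ (x : Fin m → ℝ) (i j : Fin m),
          pd j (fun z => u z i) x - pd i (fun z => u z j) x = 0) ∧
      (∀ x : Fin m → ℝ, ∑ j, pd j (fun z => u z j) x = 0)) := by
  have hv : ∀ i, ContDiff ℝ 2 (fun z => u z i) := fun i =>
    (ContinuousLinearMap.proj (R := ℝ) (φ := fun _ : Fin m => ℝ) i).contDiff.comp hu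
  have hvs : ∀ i, HasCompactSupport (fun z => u z i) := fun i =>
    hsupp.comp_left (g := fun w : Fin m → ℝ => w i) rfl
  constructor
  · exact green (fun i z => u z i) hv hvs μ (2 * μ + lam)
  · intro hμ hc hPDE
    obtain ⟨h1, h2⟩ := vanish (fun i z => u z i) hv hvs μ lam hμ hc (fun x i => hPDE x i)
    exact ⟨fun x i j => h1 x i j, fun x => h2 x⟩
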